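/- Suppose every single-edge subtrajectory T(i, i+1) of the trajectory T = v_0 … v_{k−1} is optimal. Then the greedy segmentation of T is a segmentation of T, and its number of segments is minimal among all segmentations of T. -/

import Mathlib

open scoped ENNReal

variable {V : Type*}

/-- `f 0, f 1, …, f m` is a trajectory: every consecutive pair is joined by an edge
(of finite weight). -/
def IsTraj (w : V → V → ℝ≥0∞) (m : ℕ) (f : ℕ → V) : Prop :=
  ∀ i < m, w (f i) (f (i + 1)) < ⊤

/-- The cost of the trajectory `f 0, …, f m`. -/
noncomputable def trajCost (w : V → V → ℝ≥0∞) (m : ℕ) (f : ℕ → V) : ℝ≥0∞ :=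
  ∑ i ∈ Finset.range m, w (f i) (f (i + 1))

/-- The distance from `u` to `v`: the infimum of costs of all trajectories from `u` to `v`. -/
noncomputable def netDist (w : V → V → ℝ≥0∞) (u v : V) : ℝ≥0∞ :=
  ⨅ (m : ℕ) (f : ℕ → V) (_ : f 0 = u) (_ : f m = v) (_ : IsTraj w m f), trajCost w m f

/-- The subtrajectory `T(i, j)` of the trajectory given by `f` is optimal. -/
def SegOpt (w : V → V → ℝ≥0∞) (f : ℕ → V) (i j : ℕ) : Prop :=
  trajCost w (j - i) (fun l => f (i + l)) = netDist w (f i) (f j)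

/-- `b 0 = 0 < b 1 < … < b B = k - 1` is a segmentation of the trajectory
`f 0, …, f (k-1)` into `B` optimal segments. -/
def IsSeg (w : V → V → ℝ≥0∞) (f : ℕ → V) (k B : ℕ) (b : ℕ → ℕ) : Prop :=
  b 0 = 0 ∧ b B = k - 1 ∧ (∀ l < B, b l < b (l + 1)) ∧
    ∀ l < B, SegOpt w f (b l) (b (l + 1))

/-- `T(i, j)` is a minimal non-optimal subtrajectory (MNOST). -/
def IsMNOST (w : V → V → ℝ≥0∞) (f : ℕ → V) (i j : ℕ) : Prop :=
  i < j ∧ ¬ SegOpt w f i j ∧ SegOpt w f (i + 1) j ∧ SegOpt w f i (j - 1)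

/-- The next greedy index after `i`: the largest `x ≤ k - 1` such that the
subtrajectory `T(i, x)` is optimal (and `x > i`). -/
noncomputable def greedyNext (w : V → V → ℝ≥0∞) (f : ℕ → V) (k i : ℕ) : ℕ :=
  @Nat.findGreatest (fun x => i < x ∧ SegOpt w f i x) (Classical.decPred _) (k - 1)

/-- The indices of the greedy segmentation of the trajectory `f 0, …, f (k-1)`. -/
noncomputable def greedySeq (w : V → V → ℝ≥0∞) (f : ℕ → V) (k : ℕ) : ℕ → ℕ
  | 0 => 0
  | l + 1 => greedyNext w f k (greedySeq w f k l)

lemma netDist_le_trajCost (w : V → V → ℝ≥0∞) (m : ℕ) (f : ℕ → V) (h : IsTraj w m f) :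
    netDist w (f 0) (f m) ≤ trajCost w m f := by
  refine iInf_le_of_le m (iInf_le_of_le f ?_)
  exact iInf_le_of_le rfl (iInf_le_of_le rfl (iInf_le _ h))

lemma netDist_triangle (w : V → V → ℝ≥0∞) (u x v : V) :
    netDist w u v ≤ netDist w u x + netDist w x v := by
  conv_rhs => rw [netDist, netDist]
  simp only [ENNReal.iInf_add, ENNReal.add_iInf, le_iInf_iff]
  intro m' f' hf0' hfm' hft' m f hf0 hfm hft
  set h : ℕ → V := fun n => if n < m then f n else f' (n - m) with hh
  have hA : ∀ i ≤ m, h i = f i := by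
    intro i hi
    rcases lt_or_eq_of_le hi with hlt | rfl
    · simp [hh, hlt]
    · simp [hh, hf0', hfm]
  have hB : ∀ i, h (m + i) = f' i := by
    intro i; simp [hh]
  have ht : IsTraj w (m + m') h := by
    intro i hi
    rcases lt_or_ge i m with hlt | hge
    · rw [hA i hlt.le, hA (i + 1) hlt]
      exact hft i hlt
    · obtain ⟨j, rfl⟩ := Nat.exists_eq_add_of_le hge
      rw [hB j, show m + j + 1 = m + (j + 1) by omega, hB (j + 1)]
      exact hft' j (by omega)
  have hcost : trajCost w (m + m') h = trajCost w m f + trajCost w m' f' := by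
    unfold trajCost
    rw [Finset.sum_range_add]
    congr 1
    · refine Finset.sum_congr rfl fun i hi => ?_
      simp only [Finset.mem_range] at hi
      rw [hA i hi.le, hA (i + 1) hi]
    · refine Finset.sum_congr rfl fun i hi => ?_
      rw [hB i, show m + i + 1 = m + (i + 1) by omega, hB (i + 1)]
  have hfinal := netDist_le_trajCost w (m + m') h ht
  rw [hA 0 (Nat.zero_le m), hf0, show h (m + m') = v from by rw [hB m']; exact hfm',
    hcost] at hfinal
  exact hfinal

lemma trajCost_shift (w : V → V → ℝ≥0∞) (f : ℕ → V) {i j : ℕ} (hij : i ≤ j) :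
    trajCost w (j - i) (fun l => f (i + l)) = ∑ l ∈ Finset.Ico i j, w (f l) (f (l + 1)) := by
  rw [Finset.sum_Ico_eq_sum_range]
  unfold trajCost
  refine Finset.sum_congr rfl fun l _ => ?_
  simp [Nat.add_assoc]

lemma sum_Ico_lt_top {w : V → V → ℝ≥0∞} {k : ℕ} {f : ℕ → V} (htraj : IsTraj w (k - 1) f)
    {i j : ℕ} (hj : j ≤ k - 1) :
    ∑ l ∈ Finset.Ico i j, w (f l) (f (l + 1)) < ⊤ := by
  refine ENNReal.sum_lt_top.mpr fun l hl => ?_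
  simp only [Finset.mem_Ico] at hl
  exact htraj l (by omega)

lemma netDist_le_Ico {w : V → V → ℝ≥0∞} {k : ℕ} {f : ℕ → V} (htraj : IsTraj w (k - 1) f)
    {i j : ℕ} (hij : i ≤ j) (hj : j ≤ k - 1) :
    netDist w (f i) (f j) ≤ ∑ l ∈ Finset.Ico i j, w (f l) (f (l + 1)) := by
  rw [← trajCost_shift w f hij]
  have ht : IsTraj w (j - i) (fun l => f (i + l)) := by
    intro l hl
    simp only
    rw [← Nat.add_assoc]
    exact htraj (i + l) (by omega)
  have h := netDist_le_trajCost w (j - i) _ ht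
  simpa [Nat.add_sub_cancel' hij] using h

lemma segOpt_mono {w : V → V → ℝ≥0∞} {k : ℕ} {f : ℕ → V} (htraj : IsTraj w (k - 1) f)
    {i i' j' j : ℕ} (h1 : i ≤ i') (h2 : i' ≤ j') (h3 : j' ≤ j) (h4 : j ≤ k - 1)
    (hopt : SegOpt w f i j) : SegOpt w f i' j' := by
  unfold SegOpt at hopt ⊢
  rw [trajCost_shift w f (h1.trans (h2.trans h3))] at hopt
  rw [trajCost_shift w f h2]
  set c1 := ∑ l ∈ Finset.Ico i i', w (f l) (f (l + 1)) with hc1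
  set c2 := ∑ l ∈ Finset.Ico i' j', w (f l) (f (l + 1)) with hc2
  set c3 := ∑ l ∈ Finset.Ico j' j, w (f l) (f (l + 1)) with hc3
  have hsplit : c1 + c2 + c3 = ∑ l ∈ Finset.Ico i j, w (f l) (f (l + 1)) := by
    rw [hc1, hc2, hc3, Finset.sum_Ico_consecutive _ h1 h2,
      Finset.sum_Ico_consecutive _ (h1.trans h2) h3]
  have hd2 : netDist w (f i') (f j') ≤ c2 := netDist_le_Ico htraj h2 (h3.trans h4)
  have hkey : c1 + (c2 + c3) ≤ c1 + (netDist w (f i') (f j') + c3) := by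
    rw [← add_assoc, hsplit, hopt]
    calc netDist w (f i) (f j)
        ≤ netDist w (f i) (f i') + netDist w (f i') (f j) := netDist_triangle w _ _ _
      _ ≤ netDist w (f i) (f i') + (netDist w (f i') (f j') + netDist w (f j') (f j)) :=
          add_le_add_right (netDist_triangle w _ _ _) _
      _ ≤ c1 + (netDist w (f i') (f j') + c3) :=
          add_le_add (netDist_le_Ico htraj h1 (h2.trans (h3.trans h4)))
            (add_le_add_right (netDist_le_Ico htraj h3 h4) _)
  have hfin1 : c1 ≠ ⊤ := (sum_Ico_lt_top htraj (h2.trans (h3.trans h4))).ne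
  have hfin3 : c3 ≠ ⊤ := (sum_Ico_lt_top htraj h4).ne
  have hc2le : c2 ≤ netDist w (f i') (f j') := by
    have h5 := (ENNReal.add_le_add_iff_left hfin1).mp hkey
    exact (ENNReal.add_le_add_iff_right hfin3).mp h5
  exact le_antisymm hc2le hd2

lemma greedyNext_ge {w : V → V → ℝ≥0∞} {f : ℕ → V} {k i j : ℕ} (hj : j ≤ k - 1)
    (h : i < j ∧ SegOpt w f i j) : j ≤ greedyNext w f k i := by
  unfold greedyNext
  letI : DecidablePred (fun x => i < x ∧ SegOpt w f i x) := Classical.decPred _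
  exact Nat.le_findGreatest hj h

lemma greedyNext_le (w : V → V → ℝ≥0∞) (f : ℕ → V) (k i : ℕ) :
    greedyNext w f k i ≤ k - 1 := by
  letI : DecidablePred (fun x => i < x ∧ SegOpt w f i x) := Classical.decPred _
  unfold greedyNext
  exact Nat.findGreatest_le _

lemma greedyNext_spec {w : V → V → ℝ≥0∞} {f : ℕ → V} {k i j : ℕ} (hj : j ≤ k - 1)
    (h : i < j ∧ SegOpt w f i j) : i < greedyNext w f k i ∧ SegOpt w f i (greedyNext w f k i) := by
  letI : DecidablePred (fun x => i < x ∧ SegOpt w f i x) := Classical.decPred _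
  unfold greedyNext
  exact Nat.findGreatest_spec (P := fun x => i < x ∧ SegOpt w f i x) hj h

/-- If every single-edge subtrajectory of `T` is optimal, the greedy segmentation of `T`
is a segmentation of `T`, and its number of segments is minimal among all segmentations. -/
theorem greedy_segmentation_is_minimal [Fintype V]
    (w : V → V → ℝ≥0∞) (k : ℕ) (hk : 1 ≤ k) (f : ℕ → V)
    (htraj : IsTraj w (k - 1) f)
    (hedges : ∀ i < k - 1, SegOpt w f i (i + 1)) :
    ∃ B, IsSeg w f k B (greedySeq w f k) ∧
      ∀ B' (b' : ℕ → ℕ), IsSeg w f k B' b' → B ≤ B' := by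

  set g := greedySeq w f k with hg
  have hg0 : g 0 = 0 := rfl
  have hgsucc : ∀ n, g (n + 1) = greedyNext w f k (g n) := fun n => rfl
  have hgl : ∀ l, g l ≤ k - 1 := by
    intro l
    cases l with
    | zero => omega
    | succ n => rw [hgsucc]; exact greedyNext_le w f k (g n)
  have hstep : ∀ l, g l < k - 1 → g l < g (l + 1) ∧ SegOpt w f (g l) (g (l + 1)) := by
    intro l hl
    rw [hgsucc]
    exact greedyNext_spec (by omega) ⟨Nat.lt_succ_self _, hedges _ hl⟩
  have hreach : ∃ l, g l = k - 1 := by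
    by_contra hcon
    push_neg at hcon
    have hge : ∀ l, l ≤ g l := by
      intro l
      induction l with
      | zero => omega
      | succ n ih =>
        have h1 : g n < k - 1 := lt_of_le_of_ne (hgl n) (hcon n)
        have := (hstep n h1).1
        omega
    have h1 := hge (k - 1)
    have h2 := hgl (k - 1)
    exact hcon (k - 1) (by omega)
  refine ⟨Nat.find hreach, ?_, ?_⟩
  · have hBspec : g (Nat.find hreach) = k - 1 := Nat.find_spec hreach
    have hBlt : ∀ l < Nat.find hreach, g l < k - 1 :=
      fun l hl => lt_of_le_of_ne (hgl l) (Nat.find_min hreach hl)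
    exact ⟨hg0, hBspec, fun l hl => (hstep l (hBlt l hl)).1, fun l hl => (hstep l (hBlt l hl)).2⟩
  · intro B' b' hseg
    obtain ⟨hb0, hbB, hbmono, hbopt⟩ := hseg
    by_contra hlt
    push_neg at hlt
    have hBlt : ∀ l < Nat.find hreach, g l < k - 1 :=
      fun l hl => lt_of_le_of_ne (hgl l) (Nat.find_min hreach hl)
    have hble : ∀ m ≤ B', ∀ l ≤ m, b' l ≤ b' m := by
      intro m hm
      induction m with
      | zero => intro l hl; rw [Nat.le_zero.mp hl]
      | succ n ih =>
        intro l hl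
        rcases eq_or_lt_of_le hl with rfl | h
        · exact le_rfl
        · exact le_trans (ih (by omega) l (by omega)) (le_of_lt (hbmono n (by omega)))
    have hbk : ∀ l ≤ B', b' l ≤ k - 1 := fun l hl => hbB ▸ hble B' le_rfl l hl
    have hkey : ∀ l ≤ B', b' l ≤ g l := by
      intro l hl
      induction l with
      | zero => omega
      | succ n ih =>
        have ihn := ih (by omega)
        have hn : g n < k - 1 := hBlt n (by omega)
        rcases le_or_gt (b' (n + 1)) (g n) with hc | hc
        · exact le_trans hc (le_of_lt (hstep n hn).1)
        · have hopt' : SegOpt w f (g n) (b' (n + 1)) :=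
            segOpt_mono htraj ihn (le_of_lt hc) le_rfl (hbk (n + 1) hl) (hbopt n (by omega))
          rw [hgsucc]
          exact greedyNext_ge (hbk (n + 1) hl) ⟨hc, hopt'⟩
    have h1 : b' B' ≤ g B' := hkey B' le_rfl
    rw [hbB] at h1
    have h2 : g B' = k - 1 := le_antisymm (hgl B') h1
    exact absurd (Nat.find_min' hreach h2) (by omega)
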